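/- For the pair (A_0, A_1) = (M_0, M_1F), and likewise for the pair (A_0, A_1) = (M_0F, M_1), the associated Gauss-type map is not continuous: there exists no continuous map G : Δ → Δ such that for each a ∈ {0,1} and every x ∈ A_a[Δ] one has G(x) = A_a^{−1}x/‖A_a^{−1}x‖₁. -/

import Mathlib

open Matrix

abbrev MatZ (n : ℕ) : Type := Matrix (Fin (n + 1)) (Fin (n + 1)) ℤ

def inSigma {n : ℕ} (A : MatZ n) : Prop :=
  IsUnit A.det ∧ ∀ i j, 0 ≤ A i j

def IsPermMat {n : ℕ} (A : MatZ n) : Prop :=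
  ∃ σ : Equiv.Perm (Fin (n + 1)), ∀ i j, A i j = if i = σ j then 1 else 0

noncomputable def toR {n : ℕ} (A : MatZ n) : Matrix (Fin (n + 1)) (Fin (n + 1)) ℝ :=
  A.map ((↑) : ℤ → ℝ)

noncomputable def projAct {n : ℕ} (A : Matrix (Fin (n + 1)) (Fin (n + 1)) ℝ)
    (x : Fin (n + 1) → ℝ) : Fin (n + 1) → ℝ :=
  (∑ i, (A *ᵥ x) i)⁻¹ • (A *ᵥ x)

noncomputable def simg {n : ℕ} (A : MatZ n) : Set (Fin (n + 1) → ℝ) :=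
  projAct (toR A) '' stdSimplex ℝ (Fin (n + 1))

def wordProd {n : ℕ} (A0 A1 : MatZ n) (w : List Bool) : MatZ n :=
  (w.map (fun b => bif b then A1 else A0)).prod

def Contractive {n : ℕ} (A0 A1 : MatZ n) : Prop :=
  ∀ a : ℕ → Bool, ∃ p,
    (⋂ t : ℕ, simg (wordProd A0 A1 ((List.range t).map a))) = {p}

def Nmat (n : ℕ) : MatZ n :=
  Matrix.of fun i j => if i = j then 1 else if j = 1 ∧ i = 0 then 1 else 0

def Fmat (n : ℕ) : MatZ n :=
  Matrix.of fun i j => if i = Equiv.swap (0 : Fin (n + 1)) 1 j then 1 else 0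

def Rmat (n : ℕ) : MatZ n :=
  Matrix.of fun i j => if i = j + 1 then 1 else 0

def Lmat (n : ℕ) : MatZ n := Fmat n * Nmat n * Fmat n

def Mon0 (n : ℕ) : MatZ n := Nmat n * Fmat n * Rmat n

def Mon1 (n : ℕ) : MatZ n := Lmat n * Rmat n

def permMat {n : ℕ} (σ : Equiv.Perm (Fin (n + 1))) : MatZ n :=
  Matrix.of fun i j => if i = σ j then 1 else 0

/-! ### Auxiliary lemmas -/

section Aux

variable {n : ℕ}

lemma toR_mul' (A B : MatZ n) : toR (A * B) = toR A * toR B :=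
  Matrix.map_mul (f := Int.castRingHom ℝ)

lemma toR_one' : toR (1 : MatZ n) = 1 :=
  Matrix.map_one _ (by simp) (by simp)

lemma permMat_mul (σ τ : Equiv.Perm (Fin (n+1))) :
    (permMat σ : MatZ n) * permMat τ = permMat (σ * τ) := by
  ext i j
  rw [Matrix.mul_apply]
  simp only [permMat, Matrix.of_apply, ite_mul, one_mul, zero_mul, mul_ite]
  rw [Finset.sum_eq_single (τ j)]
  · by_cases hh : i = σ (τ j) <;> simp [hh]
  · intro k _ hk; simp [hk]
  · simp

lemma permMat_one : (permMat (1 : Equiv.Perm (Fin (n+1))) : MatZ n) = 1 := by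
  ext i j
  by_cases hh : i = j <;> simp [permMat, Matrix.one_apply, hh]

lemma Fmat_eq : Fmat n = permMat (Equiv.swap 0 1) := rfl

lemma Rmat_eq : Rmat n = permMat (Equiv.addRight 1) := by
  ext i j
  by_cases hh : i = j + 1 <;> simp [Rmat, permMat, Equiv.coe_addRight, hh]

lemma Nmat_eq (h : (0 : Fin (n+1)) ≠ 1) :
    Nmat n = 1 + Matrix.single (0 : Fin (n+1)) 1 (1 : ℤ) := by
  ext i j
  simp only [Nmat, Matrix.of_apply, Matrix.add_apply, Matrix.one_apply,
    Matrix.single, Matrix.of_apply]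
  by_cases hij : i = j
  · subst hij
    have : ¬ ((0:Fin (n+1)) = i ∧ (1:Fin (n+1)) = i) := by
      rintro ⟨rfl, h1⟩; exact h h1.symm
    simp [this]
  · simp only [if_neg hij, zero_add]
    by_cases hc : j = 1 ∧ i = 0
    · simp [hc.1.symm, hc.2.symm]
    · rw [if_neg hc, if_neg]
      rintro ⟨rfl, rfl⟩; exact hc ⟨rfl, rfl⟩

def Ninv (n : ℕ) : MatZ n := 1 - Matrix.single (0 : Fin (n+1)) 1 (1 : ℤ)

lemma Ninv_mul (h : (0 : Fin (n+1)) ≠ 1) : Ninv n * Nmat n = 1 := by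
  rw [Nmat_eq h, Ninv]
  have hE : Matrix.single (0 : Fin (n+1)) (1 : Fin (n+1)) (1:ℤ) *
      Matrix.single (0 : Fin (n+1)) (1 : Fin (n+1)) (1:ℤ) = 0 :=
    Matrix.single_mul_single_of_ne (h := Ne.symm h) ..
  rw [sub_mul, one_mul, mul_add, mul_one, hE]
  abel

lemma toR_perm_mulVec (σ : Equiv.Perm (Fin (n+1))) (j : Fin (n+1)) (c : ℝ) :
    toR (permMat σ) *ᵥ Pi.single j c = Pi.single (σ j) c := by
  funext i
  simp [toR, permMat, Pi.single_apply, eq_comm]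

lemma toR_N_mulVec_ne (j : Fin (n+1)) (c : ℝ) (hj : j ≠ 1) :
    toR (Nmat n) *ᵥ Pi.single j c = Pi.single j c := by
  funext i
  simp [toR, Nmat, Pi.single_apply, hj, eq_comm]

lemma toR_N_mulVec_one (c : ℝ) (h : (0 : Fin (n+1)) ≠ 1) :
    toR (Nmat n) *ᵥ Pi.single (1 : Fin (n+1)) c = Pi.single 0 c + Pi.single 1 c := by
  funext i
  simp only [toR, Nmat, Matrix.map_apply, Matrix.of_apply, mulVec_single, Pi.add_apply,
    Pi.single_apply]
  split_ifs with h1 h2 h3 <;> simp_all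

lemma one_single_mem (j : Fin (n+1)) :
    Pi.single j (1:ℝ) ∈ stdSimplex ℝ (Fin (n+1)) := by
  constructor
  · intro i
    by_cases h : i = j <;> simp [h, Pi.single_apply]
  · simp [Fintype.sum_pi_single']

lemma two_single_mem (j k : Fin (n+1)) (a b : ℝ) (ha : 0 ≤ a) (hb : 0 ≤ b)
    (hab : a + b = 1) :
    a • (Pi.single j 1 : Fin (n+1) → ℝ) + b • (Pi.single k 1 : Fin (n+1) → ℝ) ∈
      stdSimplex ℝ (Fin (n+1)) := by
  constructor
  · intro i
    simp only [Pi.add_apply, Pi.smul_apply, Pi.single_apply, smul_eq_mul, mul_ite,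
      mul_one, mul_zero]
    split_ifs <;> simp [ha, hb, add_nonneg ha hb]
  · simp [Finset.sum_add_distrib, ← Finset.mul_sum, Fintype.sum_pi_single', hab]

lemma keyLem (A : MatZ n) (B : Matrix (Fin (n+1)) (Fin (n+1)) ℝ) (hB : B * toR A = 1)
    (x y : Fin (n+1) → ℝ) (hy : y ∈ stdSimplex ℝ (Fin (n+1))) (hx : ∑ i, x i = 1)
    (c : ℝ) (hc : c ≠ 0) (hA : toR A *ᵥ y = c • x) :
    x ∈ simg A ∧ projAct (toR A)⁻¹ x = y := by
  have hsum : ∑ i, (c • x) i = c := by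
    simp [Pi.smul_apply, ← Finset.mul_sum, hx]
  constructor
  · refine ⟨y, hy, ?_⟩
    unfold projAct
    rw [hA, hsum, smul_smul, inv_mul_cancel₀ hc, one_smul]
  · have hinv : (toR A)⁻¹ = B := Matrix.inv_eq_left_inv hB
    have hBx : B *ᵥ x = c⁻¹ • y := by
      have hx' : x = c⁻¹ • (toR A *ᵥ y) := by
        rw [hA, smul_smul, inv_mul_cancel₀ hc, one_smul]
      rw [hx', Matrix.mulVec_smul, Matrix.mulVec_mulVec, hB, Matrix.one_mulVec]
    have hsum' : ∑ i, (c⁻¹ • y) i = c⁻¹ := by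
      simp [Pi.smul_apply, ← Finset.mul_sum, hy.2]
    unfold projAct
    rw [hinv, hBx, hsum', smul_smul, inv_inv, mul_inv_cancel₀ hc, one_smul]

lemma crux (A0 A1 : MatZ n) (B0 B1 : Matrix (Fin (n+1)) (Fin (n+1)) ℝ)
    (hB0 : B0 * toR A0 = 1) (hB1 : B1 * toR A1 = 1)
    (x y0 y1 : Fin (n+1) → ℝ)
    (hy0 : y0 ∈ stdSimplex ℝ (Fin (n+1))) (hy1 : y1 ∈ stdSimplex ℝ (Fin (n+1)))
    (hx : ∑ i, x i = 1) (c0 c1 : ℝ) (hc0 : c0 ≠ 0) (hc1 : c1 ≠ 0)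
    (h0 : toR A0 *ᵥ y0 = c0 • x) (h1 : toR A1 *ᵥ y1 = c1 • x) (hne : y0 ≠ y1) :
    ¬ ∃ G : (Fin (n + 1) → ℝ) → (Fin (n + 1) → ℝ),
      ContinuousOn G (stdSimplex ℝ (Fin (n + 1))) ∧
      Set.MapsTo G (stdSimplex ℝ (Fin (n + 1))) (stdSimplex ℝ (Fin (n + 1))) ∧
      (∀ x ∈ simg A0, G x = projAct (toR A0)⁻¹ x) ∧
      (∀ x ∈ simg A1, G x = projAct (toR A1)⁻¹ x) := by
  rintro ⟨G, -, -, hG0, hG1⟩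
  obtain ⟨hm0, hp0⟩ := keyLem A0 B0 hB0 x y0 hy0 hx c0 hc0 h0
  obtain ⟨hm1, hp1⟩ := keyLem A1 B1 hB1 x y1 hy1 hx c1 hc1 h1
  apply hne
  rw [← hp0, ← hp1, ← hG0 x hm0, ← hG1 x hm1]

end Aux

theorem stmt7 (n : ℕ) (hn : 1 ≤ n) (A0 A1 : MatZ n)
    (h : (A0, A1) = (Mon0 n, Mon1 n * Fmat n) ∨ (A0, A1) = (Mon0 n * Fmat n, Mon1 n)) :
    ¬ ∃ G : (Fin (n + 1) → ℝ) → (Fin (n + 1) → ℝ),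
      ContinuousOn G (stdSimplex ℝ (Fin (n + 1))) ∧
      Set.MapsTo G (stdSimplex ℝ (Fin (n + 1))) (stdSimplex ℝ (Fin (n + 1))) ∧
      (∀ x ∈ simg A0, G x = projAct (toR A0)⁻¹ x) ∧
      (∀ x ∈ simg A1, G x = projAct (toR A1)⁻¹ x) := by
  have h01 : (0 : Fin (n+1)) ≠ 1 := by
    rw [Fin.ne_iff_vne, Fin.val_zero, Fin.val_one']
    have : 1 % (n+1) = 1 := Nat.mod_eq_of_lt (by omega)
    omega
  rcases Nat.lt_or_ge n 2 with hn2 | hn2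
  · -- the case n = 1
    interval_cases n
    have e0 : Mon0 1 = !![1,1;0,1] := by decide
    have e1 : Mon1 1 * Fmat 1 = !![1,0;1,1] := by decide
    have e2 : Mon0 1 * Fmat 1 = !![1,1;1,0] := by decide
    have e3 : Mon1 1 = !![0,1;1,1] := by decide
    have sing_ne : (Pi.single (1 : Fin 2) 1 : Fin 2 → ℝ) ≠ Pi.single (0 : Fin 2) 1 := by
      intro hcontra
      have := congrFun hcontra 0
      simp [Pi.single_apply] at this
    set x : Fin 2 → ℝ := fun _ => (1/2 : ℝ) with hxdef
    have hx : ∑ i, x i = 1 := by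
      rw [Fin.sum_univ_two]; norm_num [hxdef]
    have colv : ∀ M : MatZ 1, ∀ j : Fin 2, M 0 j = 1 → M 1 j = 1 →
        toR M *ᵥ (Pi.single j 1 : Fin 2 → ℝ) = (2:ℝ) • x := by
      intro M j hM0 hM1
      funext i
      fin_cases i <;>
        simp [toR, Matrix.mulVec_single, Matrix.map_apply, hM0, hM1, hxdef] <;> norm_num
    rcases h with h | h <;> simp only [Prod.mk.injEq] at h <;> obtain ⟨rfl, rfl⟩ := h
    · refine crux _ _ (toR !![1,-1;0,1]) (toR !![1,0;-1,1]) ?_ ?_ x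
        (Pi.single 1 1) (Pi.single 0 1) (one_single_mem 1) (one_single_mem 0) hx
        2 2 two_ne_zero two_ne_zero ?_ ?_ sing_ne
      · rw [← toR_mul', show !![1,-1;0,1] * Mon0 1 = 1 by decide, toR_one']
      · rw [← toR_mul', show !![1,0;-1,1] * (Mon1 1 * Fmat 1) = 1 by decide, toR_one']
      · exact colv _ 1 (by rw [e0]; decide) (by rw [e0]; decide)
      · exact colv _ 0 (by rw [e1]; decide) (by rw [e1]; decide)
    · refine crux _ _ (toR !![0,1;1,-1]) (toR !![(-1),1;1,0]) ?_ ?_ x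
        (Pi.single 0 1) (Pi.single 1 1) (one_single_mem 0) (one_single_mem 1) hx
        2 2 two_ne_zero two_ne_zero ?_ ?_ sing_ne.symm
      · rw [← toR_mul', show !![0,1;1,-1] * (Mon0 1 * Fmat 1) = 1 by decide, toR_one']
      · rw [← toR_mul', show !![(-1),1;1,0] * Mon1 1 = 1 by decide, toR_one']
      · exact colv _ 0 (by rw [e2]; decide) (by rw [e2]; decide)
      · exact colv _ 1 (by rw [e3]; decide) (by rw [e3]; decide)
  · -- the case n ≥ 2
    have h10 : (1 : Fin (n+1)) ≠ 0 := h01.symm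
    have hv1 : ((1 : Fin (n+1)) : ℕ) = 1 := by
      rw [Fin.val_one']; exact Nat.mod_eq_of_lt (by omega)
    have h2eq : (2 : Fin (n+1)) = 1 + 1 := by ext; simp [Fin.val_add]
    have hv2 : ((2 : Fin (n+1)) : ℕ) = 2 := by
      rw [h2eq, Fin.val_add, hv1]; exact Nat.mod_eq_of_lt (by omega)
    have h20 : (2 : Fin (n+1)) ≠ 0 := by
      rw [Fin.ne_iff_vne, hv2, Fin.val_zero]; omega
    have h21 : (2 : Fin (n+1)) ≠ 1 := by
      rw [Fin.ne_iff_vne, hv2, hv1]; omega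
    have ht0 : Fin.last n ≠ 0 := by
      rw [Fin.ne_iff_vne, Fin.val_last, Fin.val_zero]; omega
    have ht1 : Fin.last n ≠ 1 := by
      rw [Fin.ne_iff_vne, Fin.val_last, hv1]; omega
    have r1 : (1 : Fin (n+1)) + 1 = 2 := h2eq.symm
    have rt : Fin.last n + 1 = 0 := Fin.last_add_one n
    have f0 : Equiv.swap (0 : Fin (n+1)) 1 0 = 1 := Equiv.swap_apply_left 0 1
    have f1 : Equiv.swap (0 : Fin (n+1)) 1 1 = 0 := Equiv.swap_apply_right 0 1
    have f2 : Equiv.swap (0 : Fin (n+1)) 1 2 = 2 := Equiv.swap_apply_of_ne_of_ne h20 h21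
    have ft : Equiv.swap (0 : Fin (n+1)) 1 (Fin.last n) = Fin.last n :=
      Equiv.swap_apply_of_ne_of_ne ht0 ht1
    have hra : ∀ j : Fin (n+1), Equiv.addRight (1 : Fin (n+1)) j = j + 1 := fun j => rfl
    -- columns of Mon0
    have c01 : toR (Mon0 n) *ᵥ (Pi.single 1 1 : Fin (n+1) → ℝ) = Pi.single 2 1 := by
      rw [Mon0, Fmat_eq, Rmat_eq, toR_mul', toR_mul', ← Matrix.mulVec_mulVec,
        ← Matrix.mulVec_mulVec, toR_perm_mulVec, hra, r1, toR_perm_mulVec, f2,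
        toR_N_mulVec_ne _ _ h21]
    have c0t : toR (Mon0 n) *ᵥ (Pi.single (Fin.last n) 1 : Fin (n+1) → ℝ) =
        Pi.single 0 1 + Pi.single 1 1 := by
      rw [Mon0, Fmat_eq, Rmat_eq, toR_mul', toR_mul', ← Matrix.mulVec_mulVec,
        ← Matrix.mulVec_mulVec, toR_perm_mulVec, hra, rt, toR_perm_mulVec, f0,
        toR_N_mulVec_one _ h01]
    -- columns of Mon1
    have c11 : toR (Mon1 n) *ᵥ (Pi.single 1 1 : Fin (n+1) → ℝ) = Pi.single 2 1 := by
      rw [Mon1, Lmat, Fmat_eq, Rmat_eq, toR_mul', toR_mul', toR_mul',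
        ← Matrix.mulVec_mulVec, ← Matrix.mulVec_mulVec, ← Matrix.mulVec_mulVec,
        toR_perm_mulVec, hra, r1, toR_perm_mulVec, f2, toR_N_mulVec_ne _ _ h21,
        toR_perm_mulVec, f2]
    have c1t : toR (Mon1 n) *ᵥ (Pi.single (Fin.last n) 1 : Fin (n+1) → ℝ) =
        Pi.single 0 1 + Pi.single 1 1 := by
      rw [Mon1, Lmat, Fmat_eq, Rmat_eq, toR_mul', toR_mul', toR_mul',
        ← Matrix.mulVec_mulVec, ← Matrix.mulVec_mulVec, ← Matrix.mulVec_mulVec,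
        toR_perm_mulVec, hra, rt, toR_perm_mulVec, f0, toR_N_mulVec_one _ h01,
        Matrix.mulVec_add, toR_perm_mulVec, toR_perm_mulVec, f0, f1]
      exact add_comm _ _
    -- the point x and the two preimages
    set x : Fin (n+1) → ℝ :=
      (1/4 : ℝ) • (Pi.single 0 1 : Fin (n+1) → ℝ) +
      (1/4 : ℝ) • (Pi.single 1 1 : Fin (n+1) → ℝ) +
      (1/2 : ℝ) • (Pi.single 2 1 : Fin (n+1) → ℝ) with hxdef
    have hx : ∑ i, x i = 1 := by
      rw [hxdef]
      simp [Finset.sum_add_distrib, ← Finset.mul_sum, Fintype.sum_pi_single']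
      norm_num
    set ya : Fin (n+1) → ℝ :=
      (2/3 : ℝ) • (Pi.single 1 1 : Fin (n+1) → ℝ) +
      (1/3 : ℝ) • (Pi.single (Fin.last n) 1 : Fin (n+1) → ℝ) with hyadef
    set yb : Fin (n+1) → ℝ :=
      (2/3 : ℝ) • (Pi.single 0 1 : Fin (n+1) → ℝ) +
      (1/3 : ℝ) • (Pi.single (Fin.last n) 1 : Fin (n+1) → ℝ) with hybdef
    have hya : ya ∈ stdSimplex ℝ (Fin (n+1)) :=
      two_single_mem _ _ _ _ (by norm_num) (by norm_num) (by norm_num)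
    have hyb : yb ∈ stdSimplex ℝ (Fin (n+1)) :=
      two_single_mem _ _ _ _ (by norm_num) (by norm_num) (by norm_num)
    have hne : ya ≠ yb := by
      intro hcontra
      have h' := congrFun hcontra 1
      rw [hyadef, hybdef] at h'
      simp only [Pi.add_apply, Pi.smul_apply, Pi.single_apply, smul_eq_mul] at h'
      simp only [if_true, if_neg (Ne.symm ht1), if_neg h10] at h'
      norm_num at h'
    -- mulVec equations
    have hMon0 : toR (Mon0 n) *ᵥ ya = (4/3 : ℝ) • x := by
      rw [hyadef, Matrix.mulVec_add, Matrix.mulVec_smul, Matrix.mulVec_smul, c01, c0t,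
        hxdef]
      module
    have hMon1 : toR (Mon1 n) *ᵥ ya = (4/3 : ℝ) • x := by
      rw [hyadef, Matrix.mulVec_add, Matrix.mulVec_smul, Matrix.mulVec_smul, c11, c1t,
        hxdef]
      module
    have hFb : toR (Fmat n) *ᵥ yb = ya := by
      rw [hybdef, hyadef, Fmat_eq, Matrix.mulVec_add, Matrix.mulVec_smul,
        Matrix.mulVec_smul, toR_perm_mulVec, toR_perm_mulVec, f0, ft]
    -- integer inverses
    have hff : permMat (Equiv.swap (0 : Fin (n+1)) 1) *
        permMat (Equiv.swap (0 : Fin (n+1)) 1) = (1 : MatZ n) := by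
      rw [permMat_mul, Equiv.swap_mul_self, permMat_one]
    have hrr : permMat (Equiv.addRight (1 : Fin (n+1)))⁻¹ *
        permMat (Equiv.addRight (1 : Fin (n+1))) = (1 : MatZ n) := by
      rw [permMat_mul, inv_mul_cancel, permMat_one]
    have hB0z : (permMat (Equiv.addRight (1 : Fin (n+1)))⁻¹ *
        (permMat (Equiv.swap (0 : Fin (n+1)) 1) * Ninv n)) * Mon0 n = 1 := by
      rw [Mon0, Fmat_eq, Rmat_eq]
      simp only [mul_assoc]
      rw [← mul_assoc (Ninv n) (Nmat n), Ninv_mul h01, one_mul,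
        ← mul_assoc (permMat (Equiv.swap (0 : Fin (n+1)) 1))
          (permMat (Equiv.swap (0 : Fin (n+1)) 1)), hff, one_mul, hrr]
    have hB1z : (permMat (Equiv.addRight (1 : Fin (n+1)))⁻¹ *
        (permMat (Equiv.swap (0 : Fin (n+1)) 1) *
          (Ninv n * permMat (Equiv.swap (0 : Fin (n+1)) 1)))) * Mon1 n = 1 := by
      rw [Mon1, Lmat, Fmat_eq, Rmat_eq]
      simp only [mul_assoc]
      rw [← mul_assoc (permMat (Equiv.swap (0 : Fin (n+1)) 1))
          (permMat (Equiv.swap (0 : Fin (n+1)) 1)), hff, one_mul,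
        ← mul_assoc (Ninv n) (Nmat n), Ninv_mul h01, one_mul,
        ← mul_assoc (permMat (Equiv.swap (0 : Fin (n+1)) 1))
          (permMat (Equiv.swap (0 : Fin (n+1)) 1)), hff, one_mul, hrr]
    have hflip : ∀ A B : MatZ n, B * A = 1 →
        (permMat (Equiv.swap (0 : Fin (n+1)) 1) * B) * (A * Fmat n) = 1 := by
      intro A B hBA
      rw [Fmat_eq, mul_assoc, ← mul_assoc B A, hBA, one_mul, hff]
    rcases h with h | h <;> simp only [Prod.mk.injEq] at h <;> obtain ⟨rfl, rfl⟩ := h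
    · -- pair (Mon0, Mon1 * F)
      refine crux _ _
        (toR (permMat (Equiv.addRight (1 : Fin (n+1)))⁻¹ *
          (permMat (Equiv.swap (0 : Fin (n+1)) 1) * Ninv n)))
        (toR (permMat (Equiv.swap (0 : Fin (n+1)) 1) *
          (permMat (Equiv.addRight (1 : Fin (n+1)))⁻¹ *
            (permMat (Equiv.swap (0 : Fin (n+1)) 1) *
              (Ninv n * permMat (Equiv.swap (0 : Fin (n+1)) 1))))))
        ?_ ?_ x ya yb hya hyb hx (4/3) (4/3) (by norm_num) (by norm_num)
        hMon0 ?_ hne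
      · rw [← toR_mul', hB0z, toR_one']
      · rw [← toR_mul', hflip _ _ hB1z, toR_one']
      · rw [toR_mul', ← Matrix.mulVec_mulVec, hFb, hMon1]
    · -- pair (Mon0 * F, Mon1)
      refine crux _ _
        (toR (permMat (Equiv.swap (0 : Fin (n+1)) 1) *
          (permMat (Equiv.addRight (1 : Fin (n+1)))⁻¹ *
            (permMat (Equiv.swap (0 : Fin (n+1)) 1) * Ninv n))))
        (toR (permMat (Equiv.addRight (1 : Fin (n+1)))⁻¹ *
          (permMat (Equiv.swap (0 : Fin (n+1)) 1) *
            (Ninv n * permMat (Equiv.swap (0 : Fin (n+1)) 1)))))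
        ?_ ?_ x yb ya hyb hya hx (4/3) (4/3) (by norm_num) (by norm_num)
        ?_ hMon1 hne.symm
      · rw [← toR_mul', hflip _ _ hB0z, toR_one']
      · rw [← toR_mul', hB1z, toR_one']
      · rw [toR_mul', ← Matrix.mulVec_mulVec, hFb, hMon0]
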